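/- arXiv:2604.11448 — 3 statements merged into one kernel-verified Lean document; each statement's English description precedes it below -/
import Mathlib

section
/- Let 1 < p < ∞ and let A : (a,b) → [0,∞) be measurable with ∫_a^b A(t)^{-1/(p-1)} dt = +∞ (with the convention that the integrand is +∞ where A vanishes). Then the infimum of ∫_a^b |v'(t)|^p A(t) dt over all absolutely continuous v on [a,b] with v(a)=0, v(b)=1 equals 0. -/
open MeasureTheory Set Filter
open scoped ENNReal Topology

/-- if the reduced resistance diverges, the infimum of the
weighted `p`-energy over admissible absolutely continuous profiles
(encoded by their derivatives `v'`, interval integrable with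
`∫_a^b v' = 1`) equals `0`. -/
theorem stmt2 (p a b : ℝ) (hp : 1 < p) (hab : a < b)
    (A : ℝ → ℝ) (hAmeas : Measurable A) (hA0 : ∀ t ∈ Ioo a b, 0 ≤ A t)
    (hdiv : (∫⁻ t in Ioo a b, (ENNReal.ofReal (A t)) ^ (-(1 / (p - 1)))) = ⊤) :
    sInf {E : ℝ≥0∞ | ∃ v' : ℝ → ℝ, IntervalIntegrable v' volume a b ∧
        (∫ t in a..b, v' t) = 1 ∧
        E = ∫⁻ t in Ioo a b, ENNReal.ofReal (|v' t| ^ p * A t)} = 0 := by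
  have hp1 : (0:ℝ) < p - 1 := by linarith
  set q : ℝ := 1 / (p - 1) with hq_def
  have hq : 0 < q := by positivity
  set B : ℕ → ℝ → ℝ := fun k t => if A t ≤ 0 then (k+1 : ℝ) else min (A t ^ (-q)) (k+1)
    with hB_def
  have hBpos : ∀ k t, 0 < B k t := by
    intro k t
    simp only [hB_def]
    split_ifs with h
    · positivity
    · exact lt_min (Real.rpow_pos_of_pos (lt_of_not_ge h) _) (by positivity)
  have hBle : ∀ k t, B k t ≤ (k+1 : ℝ) := by
    intro k t
    simp only [hB_def]
    split_ifs with h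
    · exact le_refl _
    · exact min_le_right _ _
  have hBmeas : ∀ k, Measurable (B k) := by
    intro k
    exact Measurable.ite (measurableSet_le hAmeas measurable_const) measurable_const
      ((hAmeas.pow measurable_const).min measurable_const)
  have hBmono : ∀ k l : ℕ, k ≤ l → ∀ t, B k t ≤ B l t := by
    intro k l hkl t
    have h1 : (k:ℝ) + 1 ≤ (l:ℝ) + 1 := by
      have : (k:ℝ) ≤ l := Nat.cast_le.mpr hkl; linarith
    simp only [hB_def]
    split_ifs with h
    · exact h1
    · exact min_le_min le_rfl h1
  have hBint : ∀ k, IntegrableOn (B k) (Ioo a b) volume := by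
    intro k
    refine Measure.integrableOn_of_bounded (M := (k:ℝ)+1) measure_Ioo_lt_top.ne
      (hBmeas k).aestronglyMeasurable (ae_of_all _ fun t => ?_)
    rw [Real.norm_eq_abs, abs_of_pos (hBpos k t)]
    exact hBle k t
  set I : ℕ → ℝ := fun k => ∫ t in Ioo a b, B k t with hI_def
  have hIpos : ∀ k, 0 < I k := by
    intro k
    rw [hI_def]
    rw [setIntegral_pos_iff_support_of_nonneg_ae
      (ae_of_all _ fun t => (hBpos k t).le) (hBint k)]
    have hsupp : Function.support (B k) = univ := by
      ext t; simp [Function.mem_support, (hBpos k t).ne']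
    rw [hsupp, univ_inter, Real.volume_Ioo]
    simp [hab]
  -- lintegral of B equals ofReal of its integral
  have hofReal : ∀ k, (∫⁻ t in Ioo a b, ENNReal.ofReal (B k t)) = ENNReal.ofReal (I k) :=
    fun k => (ofReal_integral_eq_lintegral_ofReal (hBint k)
      (ae_of_all _ fun t => (hBpos k t).le)).symm
  -- divergence of I k
  have hsup : (⨆ k, ENNReal.ofReal (I k)) = ⊤ := by
    have h1 : (⨆ k, ∫⁻ t in Ioo a b, ENNReal.ofReal (B k t))
        = ∫⁻ t in Ioo a b, ⨆ k, ENNReal.ofReal (B k t) := by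
      refine (lintegral_iSup (fun k => (hBmeas k).ennreal_ofReal) ?_).symm
      intro k l hkl
      exact fun t => ENNReal.ofReal_le_ofReal (hBmono k l hkl t)
    have h2 : ∫⁻ t in Ioo a b, (⨆ k, ENNReal.ofReal (B k t))
        = ∫⁻ t in Ioo a b, (ENNReal.ofReal (A t)) ^ (-q) := by
      refine lintegral_congr_ae ?_
      filter_upwards [ae_restrict_mem measurableSet_Ioo] with t ht
      have hA := hA0 t ht
      by_cases h : A t ≤ 0
      · have hA0' : A t = 0 := le_antisymm h hA
        have hB' : ∀ k : ℕ, B k t = (k:ℝ)+1 := by intro k; simp [hB_def, h]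
        simp only [hB']
        rw [hA0', ENNReal.ofReal_zero, ENNReal.zero_rpow_of_neg (by linarith)]
        rw [eq_top_iff, ← ENNReal.iSup_natCast]
        refine iSup_mono fun k => ?_
        rw [← ENNReal.ofReal_natCast k]
        exact ENNReal.ofReal_le_ofReal (by linarith)
      · push_neg at h
        have hB' : ∀ k : ℕ, ENNReal.ofReal (B k t)
            = min ((ENNReal.ofReal (A t)) ^ (-q)) (ENNReal.ofReal ((k:ℝ)+1)) := by
          intro k
          simp only [hB_def, if_neg (not_le.mpr h)]
          have hmono : Monotone ENNReal.ofReal := fun _ _ h' => ENNReal.ofReal_le_ofReal h'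
          rw [hmono.map_min, ENNReal.ofReal_rpow_of_pos h]
        simp only [hB']
        refine le_antisymm (iSup_le fun k => min_le_left _ _) ?_
        have hfin : (ENNReal.ofReal (A t)) ^ (-q) ≠ ⊤ := by
          rw [ENNReal.ofReal_rpow_of_pos h]; exact ENNReal.ofReal_ne_top
        obtain ⟨n, hn⟩ := ENNReal.exists_nat_gt hfin
        refine le_trans ?_ (le_iSup _ n)
        rw [min_eq_left]
        refine le_trans hn.le ?_
        rw [← ENNReal.ofReal_natCast n]
        exact ENNReal.ofReal_le_ofReal (by linarith)
    calc (⨆ k, ENNReal.ofReal (I k))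
        = ∫⁻ t in Ioo a b, (ENNReal.ofReal (A t)) ^ (-q) := by
          simp_rw [fun k => (hofReal k).symm]; rw [h1, h2]
      _ = ⊤ := hdiv
  have hImono : Monotone I := by
    intro k l hkl
    exact setIntegral_mono_on (hBint k) (hBint l) measurableSet_Ioo
      (fun t _ => hBmono k l hkl t)
  have hItop : Tendsto I atTop atTop := by
    refine tendsto_atTop_atTop_of_monotone hImono ?_
    intro M
    have : ENNReal.ofReal M < ⨆ k, ENNReal.ofReal (I k) := by
      rw [hsup]; exact ENNReal.ofReal_lt_top.trans_le le_top
    obtain ⟨k, hk⟩ := lt_iSup_iff.mp this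
    refine ⟨k, ?_⟩
    by_contra hMk
    exact absurd (ENNReal.ofReal_le_ofReal (le_of_not_ge hMk)) (not_le.mpr hk)
  -- limit of the energy bound
  have hlim : Tendsto (fun k => ENNReal.ofReal (I k ^ (1 - p))) atTop (𝓝 0) := by
    have h1 : Tendsto (fun k => I k ^ (1 - p)) atTop (𝓝 0) := by
      have := (tendsto_rpow_neg_atTop hp1).comp hItop
      simpa [neg_sub, Function.comp_def] using this
    have := ENNReal.tendsto_ofReal h1
    simpa using this
  -- key pointwise estimate
  have hkey : ∀ (k : ℕ) t, 0 ≤ A t → B k t ^ p * A t ≤ B k t := by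
    intro k t hA
    by_cases h : A t ≤ 0
    · have hA0' : A t = 0 := le_antisymm h hA
      rw [hA0', mul_zero]
      exact (hBpos k t).le
    · push_neg at h
      have hBleA : B k t ≤ A t ^ (-q) := by
        simp only [hB_def, if_neg (not_le.mpr h)]
        exact min_le_left _ _
      have h1 : B k t ^ (p-1) ≤ (A t ^ (-q)) ^ (p-1) :=
        Real.rpow_le_rpow (hBpos k t).le hBleA hp1.le
      have h2 : (A t ^ (-q)) ^ (p-1) = (A t)⁻¹ := by
        rw [← Real.rpow_mul hA, ← Real.rpow_neg_one (A t)]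
        congr 1
        rw [hq_def]
        field_simp
      have h3 : B k t ^ p = B k t ^ (p-1) * B k t := by
        rw [← Real.rpow_add_one (hBpos k t).ne' (p-1)]
        ring_nf
      calc B k t ^ p * A t = B k t ^ (p-1) * (B k t * A t) := by rw [h3]; ring
        _ ≤ (A t)⁻¹ * (B k t * A t) := by
            refine mul_le_mul_of_nonneg_right (h2 ▸ h1) ?_
            exact mul_nonneg (hBpos k t).le hA
        _ = B k t * ((A t)⁻¹ * A t) := by ring
        _ = B k t := by rw [inv_mul_cancel₀ h.ne']; ring
  -- main bound: sInf ≤ ofReal (I k ^ (1-p)) for each k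
  have hbound : ∀ k : ℕ, sInf {E : ℝ≥0∞ | ∃ v' : ℝ → ℝ,
      IntervalIntegrable v' volume a b ∧ (∫ t in a..b, v' t) = 1 ∧
      E = ∫⁻ t in Ioo a b, ENNReal.ofReal (|v' t| ^ p * A t)}
      ≤ ENNReal.ofReal (I k ^ (1 - p)) := by
    intro k
    set c : ℝ := I k with hc_def
    have hc : 0 < c := hIpos k
    set v' : ℝ → ℝ := fun t => B k t / c with hv_def
    have hv'meas : Measurable v' := (hBmeas k).div_const c
    have hv'int : IntervalIntegrable v' volume a b := by
      rw [intervalIntegrable_iff_integrableOn_Ioc_of_le hab.le]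
      refine Measure.integrableOn_of_bounded (M := ((k:ℝ)+1)/c) measure_Ioc_lt_top.ne
        hv'meas.aestronglyMeasurable (ae_of_all _ fun t => ?_)
      rw [hv_def, Real.norm_eq_abs, abs_div, abs_of_pos (hBpos k t), abs_of_pos hc]
      rw [div_le_div_iff_of_pos_right hc]
      exact hBle k t
    have hv'sum : (∫ t in a..b, v' t) = 1 := by
      rw [intervalIntegral.integral_of_le hab.le, integral_Ioc_eq_integral_Ioo]
      simp only [hv_def]
      rw [integral_div]
      exact div_self hc.ne'
    refine le_trans (sInf_le ⟨v', hv'int, hv'sum, rfl⟩) ?_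
    calc (∫⁻ t in Ioo a b, ENNReal.ofReal (|v' t| ^ p * A t))
        ≤ ∫⁻ t in Ioo a b, ENNReal.ofReal (c ^ (-p) * B k t) := by
          refine lintegral_mono_ae ?_
          filter_upwards [ae_restrict_mem measurableSet_Ioo] with t ht
          refine ENNReal.ofReal_le_ofReal ?_
          have hA := hA0 t ht
          have habs : |v' t| = B k t / c := by
            rw [hv_def, abs_div, abs_of_pos (hBpos k t), abs_of_pos hc]
          rw [habs, Real.div_rpow (hBpos k t).le hc.le]
          rw [div_mul_eq_mul_div, div_eq_mul_inv, ← Real.rpow_neg hc.le]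
          calc B k t ^ p * A t * c ^ (-p) ≤ B k t * c ^ (-p) := by
                refine mul_le_mul_of_nonneg_right (hkey k t hA) ?_
                positivity
            _ = c ^ (-p) * B k t := by ring
      _ = ∫⁻ t in Ioo a b, ENNReal.ofReal (c ^ (-p)) * ENNReal.ofReal (B k t) := by
          refine lintegral_congr fun t => ENNReal.ofReal_mul (by positivity)
      _ = ENNReal.ofReal (c ^ (-p)) * ∫⁻ t in Ioo a b, ENNReal.ofReal (B k t) :=
          lintegral_const_mul _ (hBmeas k).ennreal_ofReal
      _ = ENNReal.ofReal (c ^ (-p)) * ENNReal.ofReal c := by rw [hofReal k]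
      _ = ENNReal.ofReal (c ^ (-p) * c) := (ENNReal.ofReal_mul (by positivity)).symm
      _ = ENNReal.ofReal (c ^ (1 - p)) := by
          congr 1
          nth_rewrite 2 [← Real.rpow_one c]
          rw [← Real.rpow_add hc]
          congr 1
          ring
  exact le_antisymm (ge_of_tendsto' hlim hbound) zero_le
end

section
/- Let 1 < p < ∞ and let A : (a,b) → [0,∞) be measurable. If A vanishes on a subset of (a,b) of positive Lebesgue measure, then the infimum of ∫_a^b |v'(t)|^p A(t) dt over absolutely continuous v with v(a)=0, v(b)=1 equals 0. -/
open MeasureTheory Set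
open scoped ENNReal

/-- if the weight `A` vanishes on a subset of `(a,b)` of
positive Lebesgue measure, the infimum of the weighted `p`-energy over
admissible absolutely continuous profiles equals `0`. -/
theorem stmt8 (p a b : ℝ) (hp : 1 < p) (hab : a < b)
    (A : ℝ → ℝ) (hAmeas : Measurable A) (hA0 : ∀ t ∈ Ioo a b, 0 ≤ A t)
    (hvanish : 0 < volume {t ∈ Ioo a b | A t = 0}) :
    sInf {E : ℝ≥0∞ | ∃ v' : ℝ → ℝ, IntervalIntegrable v' volume a b ∧
        (∫ t in a..b, v' t) = 1 ∧
        E = ∫⁻ t in Ioo a b, ENNReal.ofReal (|v' t| ^ p * A t)} = 0 := by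
  set S : Set ℝ := {t ∈ Ioo a b | A t = 0} with hS
  have hSmeas : MeasurableSet S := by
    have : S = Ioo a b ∩ A ⁻¹' {0} := by
      ext t
      simp only [hS, mem_setOf_eq, mem_inter_iff, mem_preimage, mem_singleton_iff]
    rw [this]
    exact measurableSet_Ioo.inter (hAmeas (measurableSet_singleton 0))
  have hSsub : S ⊆ Ioo a b := fun t ht => ht.1
  have hSfin : volume S ≠ ⊤ := by
    refine ne_top_of_le_ne_top ?_ (measure_mono hSsub)
    simp [Real.volume_Ioo]
  have htR : (volume S).toReal ≠ 0 := by
    simp [ENNReal.toReal_eq_zero_iff, hvanish.ne', hSfin]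
  set c : ℝ := ((volume S).toReal)⁻¹ with hc
  set v' : ℝ → ℝ := S.indicator (fun _ => c) with hv'
  have hint : Integrable v' volume := by
    rw [hv', integrable_indicator_iff hSmeas]
    exact integrableOn_const hSfin
  refine le_antisymm (sInf_le ?_) zero_le
  refine ⟨v', hint.intervalIntegrable, ?_, ?_⟩
  · rw [intervalIntegral.integral_of_le hab.le, hv',
      setIntegral_indicator hSmeas]
    have : Ioc a b ∩ S = S := inter_eq_right.2 (hSsub.trans Ioo_subset_Ioc_self)
    rw [this, setIntegral_const, smul_eq_mul, hc, measureReal_def, mul_inv_cancel₀ htR]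
  · symm
    have hz : ∀ᵐ t ∂(volume.restrict (Ioo a b)),
        ENNReal.ofReal (|v' t| ^ p * A t) = 0 := by
      filter_upwards [ae_restrict_mem measurableSet_Ioo] with t ht
      by_cases hts : t ∈ S
      · simp [hts.2]
      · have h0 : v' t = 0 := by simp [hv', indicator_of_notMem hts]
        simp [h0, Real.zero_rpow (by linarith : p ≠ 0)]
    rw [lintegral_congr_ae hz, lintegral_zero]
end

section
/- Let 1 < p < ∞ and let A : (a,b) → [0,∞) be measurable. Then the infimum of ∫_a^b |v'|^p A dt over absolutely continuous v on [a,b] with v(a)=0, v(b)=1 and finite energy equals the infimum of the same functional over Lipschitz w : [a,b] → ℝ with w(a)=0, w(b)=1. In both cases the common value is (∫_a^b A(t)^{-1/(p-1)} dt)^{1-p}, interpreted as 0 when the integral diverges. -/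
open MeasureTheory Set Filter
open scoped ENNReal Topology

/-- key truncation inequality: if `y ≤ x^(-(1/(p-1)))` and `y ≠ ⊤`, `x ≠ ⊤`, then `y^p * x ≤ y`. -/
lemma stmt17_pt (p : ℝ) (hp : 1 < p) {x y : ℝ≥0∞} (hx : x ≠ ⊤) (hy : y ≠ ⊤)
    (hle : y ≤ x ^ (-(1 / (p - 1)))) : y ^ p * x ≤ y := by
  have hp1 : (0:ℝ) < p - 1 := by linarith
  rcases eq_or_ne y 0 with rfl | hy0
  · simp [ENNReal.zero_rpow_of_pos (by linarith : (0:ℝ) < p)]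
  rcases eq_or_ne x 0 with rfl | hx0
  · have : y ^ p ≠ ⊤ := (ENNReal.rpow_lt_top_of_nonneg (by linarith) hy).ne
    simp [mul_zero]
  · have h1 : y ^ (p - 1) ≤ x ^ (-(1 / (p - 1)) * (p - 1)) := by
      rw [ENNReal.rpow_mul]
      exact ENNReal.rpow_le_rpow hle hp1.le
    have h2 : -(1 / (p - 1)) * (p - 1) = -1 := by field_simp
    rw [h2, ENNReal.rpow_neg_one] at h1
    have hyp : y ^ p = y ^ (p - 1) * y := by
      have h := ENNReal.rpow_add (p-1) 1 hy0 hy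
      rw [ENNReal.rpow_one] at h
      rw [← h]; norm_num
    calc y ^ p * x = y ^ (p - 1) * x * y := by rw [hyp]; ring
      _ ≤ x⁻¹ * x * y := by gcongr
      _ = y := by rw [ENNReal.inv_mul_cancel hx0 hx, one_mul]

/-- arithmetic: from `1 ≤ E^(1/p) * R^((p-1)/p)` conclude `R^(1-p) ≤ E`. -/
lemma stmt17_arith (p : ℝ) (hp : 1 < p) {E R : ℝ≥0∞} (hR0 : R ≠ 0) (hRt : R ≠ ⊤)
    (h1 : 1 ≤ E ^ (1 / p) * R ^ ((p - 1) / p)) : R ^ (1 - p) ≤ E := by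
  have hp0 : (0:ℝ) < p := by linarith
  set r : ℝ≥0∞ := R ^ ((p - 1) / p) with hr
  have hr0 : r ≠ 0 := by
    simp only [hr, Ne, ENNReal.rpow_eq_zero_iff]
    push_neg
    exact ⟨fun h => absurd h hR0, fun h => absurd h hRt⟩
  have hrt : r ≠ ⊤ := ENNReal.rpow_ne_top_of_nonneg (div_nonneg (by linarith) (by linarith)) hRt
  have h2 : r⁻¹ ≤ E ^ (1 / p) := by
    calc r⁻¹ = r⁻¹ * 1 := (mul_one _).symm
      _ ≤ r⁻¹ * (E ^ (1 / p) * r) := by gcongr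
      _ = E ^ (1 / p) * (r⁻¹ * r) := by ring
      _ = E ^ (1 / p) := by rw [ENNReal.inv_mul_cancel hr0 hrt, mul_one]
  have h3 : (r⁻¹) ^ p ≤ (E ^ (1 / p)) ^ p := ENNReal.rpow_le_rpow h2 hp0.le
  have h4 : (E ^ (1 / p)) ^ p = E := by
    rw [← ENNReal.rpow_mul, one_div, inv_mul_cancel₀ hp0.ne', ENNReal.rpow_one]
  have h5 : (r⁻¹) ^ p = R ^ (1 - p) := by
    rw [hr, ← ENNReal.rpow_neg, ← ENNReal.rpow_mul]
    congr 1
    field_simp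
    ring
  rwa [h5, h4] at h3

lemma stmt17_low (p a b : ℝ) (hp : 1 < p) (hab : a < b)
    (A : ℝ → ℝ) (hAmeas : Measurable A)
    (v' : ℝ → ℝ) (hint : IntervalIntegrable v' volume a b)
    (hone : (∫ t in a..b, v' t) = 1) :
    (∫⁻ t in Ioo a b, (ENNReal.ofReal (A t)) ^ (-(1 / (p - 1)))) ^ (1 - p)
      ≤ ∫⁻ t in Ioo a b, ENNReal.ofReal (|v' t| ^ p * A t) := by
  have hp0 : (0:ℝ) < p := by linarith
  have hp1 : (0:ℝ) < p - 1 := by linarith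
  set B : ℝ → ℝ≥0∞ := fun t => (ENNReal.ofReal (A t)) ^ (-(1 / (p - 1))) with hB
  set R : ℝ≥0∞ := ∫⁻ t in Ioo a b, B t with hRdef
  rcases eq_or_ne R ⊤ with hRt | hRt
  · rw [hRt, ENNReal.top_rpow_of_neg (by linarith)]
    exact zero_le
  -- a.e. positivity of A
  have hBmeas : Measurable B := (hAmeas.ennreal_ofReal).pow_const _
  have hae : ∀ᵐ t ∂(volume.restrict (Ioo a b)), ENNReal.ofReal (A t) ≠ 0 := by
    have h := ae_lt_top hBmeas hRt
    filter_upwards [h] with t ht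
    intro h0
    have hBt : B t = ⊤ := by
      rw [hB]; simp only [h0]
      exact ENNReal.zero_rpow_of_neg (neg_neg_iff_pos.mpr (by positivity))
    rw [hBt] at ht
    exact (lt_irrefl _ ht)
  -- R ≠ 0
  have hR0 : R ≠ 0 := by
    have hBpos : ∀ t, 0 < B t := by
      intro t
      rcases eq_or_ne (ENNReal.ofReal (A t)) 0 with h | h
      · rw [hB]; simp only [h]
        rw [ENNReal.zero_rpow_of_neg (neg_neg_iff_pos.mpr (by positivity))]
        exact ENNReal.zero_lt_top
      · exact ENNReal.rpow_pos (pos_iff_ne_zero.2 h) ENNReal.ofReal_ne_top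
    rw [hRdef, ← pos_iff_ne_zero, lintegral_pos_iff_support hBmeas]
    have : Function.support B = univ := by
      ext t; simp [Function.support, (hBpos t).ne']
    rw [this]
    simp [Measure.restrict_apply, hab]
  -- measurability of v'
  have hv'm : AEMeasurable v' (volume.restrict (Ioo a b)) := by
    have h1 : IntegrableOn v' (Ioc a b) volume := hint.1
    exact (h1.aestronglyMeasurable.mono_measure
      (Measure.restrict_mono Ioo_subset_Ioc_self le_rfl)).aemeasurable
  -- 1 ≤ ∫⁻ |v'|
  have hone' : (1:ℝ≥0∞) ≤ ∫⁻ t in Ioo a b, ENNReal.ofReal |v' t| := by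
    have h1 : (∫ t in Ioc a b, v' t) = 1 := by
      rwa [intervalIntegral.integral_of_le hab.le] at hone
    have h2 : (1:ℝ≥0∞) = ‖∫ t in Ioc a b, v' t‖ₑ := by rw [h1]; simp
    have h3 := enorm_integral_le_lintegral_enorm (μ := volume.restrict (Ioc a b)) v'
    rw [← h2] at h3
    have h4 : (∫⁻ t in Ioc a b, ‖v' t‖ₑ) = ∫⁻ t in Ioo a b, ENNReal.ofReal |v' t| := by
      rw [setLIntegral_congr (Ioo_ae_eq_Ioc (μ := volume) (a := a) (b := b)).symm]
      congr 1; ext t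
      rw [← Real.enorm_eq_ofReal_abs]
    rwa [h4] at h3
  -- Hölder
  set f : ℝ → ℝ≥0∞ := fun t => (ENNReal.ofReal (|v' t| ^ p * A t)) ^ (1 / p) with hf
  set g : ℝ → ℝ≥0∞ := fun t => (B t) ^ ((p - 1) / p) with hg
  have hconj : p.HolderConjugate (p / (p - 1)) := (Real.holderConjugate_iff_eq_conjExponent hp).2 rfl
  have hfm : AEMeasurable f (volume.restrict (Ioo a b)) :=
    ((((AEMeasurable.pow_const (continuous_abs.measurable.comp_aemeasurable hv'm) p)).mul hAmeas.aemeasurable).ennreal_ofReal).pow_const _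
  have hgm : AEMeasurable g (volume.restrict (Ioo a b)) :=
    (hBmeas.pow_const _).aemeasurable
  have hold := ENNReal.lintegral_mul_le_Lp_mul_Lq (volume.restrict (Ioo a b)) hconj hfm hgm
  -- pointwise a.e.: ofReal |v'| ≤ f * g
  have hpt : ∀ᵐ t ∂(volume.restrict (Ioo a b)), ENNReal.ofReal |v' t| ≤ f t * g t := by
    filter_upwards [hae] with t hx
    set x := ENNReal.ofReal (A t) with hxdef
    have hxt : x ≠ ⊤ := ENNReal.ofReal_ne_top
    have hA : 0 ≤ A t := by
      by_contra hneg
      exact hx (by simp [hxdef, ENNReal.ofReal_eq_zero]; linarith)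
    have e1 : ENNReal.ofReal (|v' t| ^ p * A t) = (ENNReal.ofReal |v' t|) ^ p * x := by
      rw [ENNReal.ofReal_mul (by positivity), ENNReal.ofReal_rpow_of_nonneg (abs_nonneg _) hp0.le]
    have e2 : f t = ENNReal.ofReal |v' t| * x ^ (1 / p) := by
      rw [hf]; simp only
      rw [e1, ENNReal.mul_rpow_of_nonneg _ _ (by positivity), ← ENNReal.rpow_mul,
        mul_one_div, div_self hp0.ne', ENNReal.rpow_one]
    have e3 : g t = x ^ (-(1 / p)) := by
      rw [hg]; simp only [hB]
      rw [← ENNReal.rpow_mul]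
      congr 1
      field_simp
    rw [e2, e3, mul_assoc, ← ENNReal.rpow_add _ _ hx hxt]
    simp
  calc R ^ (1 - p) ≤ (∫⁻ t in Ioo a b, ENNReal.ofReal (|v' t| ^ p * A t)) := by
        apply stmt17_arith p hp hR0 hRt
        have hint1 : (1:ℝ≥0∞) ≤ ∫⁻ t in Ioo a b, f t * g t :=
          le_trans hone' (lintegral_mono_ae hpt)
        refine le_trans (le_trans hint1 hold) ?_
        have hee : ((p-1)/p) * (p/(p-1)) = (1:ℝ) := by
          field_simp
        have e4 : (∫⁻ t in Ioo a b, f t ^ p) = ∫⁻ t in Ioo a b, ENNReal.ofReal (|v' t| ^ p * A t) := by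
          refine lintegral_congr fun t => ?_
          rw [hf]; dsimp only
          rw [← ENNReal.rpow_mul, one_div, inv_mul_cancel₀ hp0.ne', ENNReal.rpow_one]
        have e5 : (∫⁻ t in Ioo a b, g t ^ (p / (p - 1))) = R := by
          rw [hRdef]
          refine lintegral_congr fun t => ?_
          rw [hg]; dsimp only
          rw [← ENNReal.rpow_mul, hee, ENNReal.rpow_one]
        have e6 : 1 / (p / (p - 1)) = (p - 1) / p := by field_simp
        rw [e4, e5, e6]

lemma stmt17_up (p a b : ℝ) (hp : 1 < p) (hab : a < b)
    (A : ℝ → ℝ) (hAmeas : Measurable A)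
    (S : Set ℝ≥0∞)
    (hS : ∀ w' : ℝ → ℝ, IntervalIntegrable w' volume a b →
      (∫ t in a..b, w' t) = 1 → (∃ C : ℝ, ∀ t ∈ Ioo a b, |w' t| ≤ C) →
      (∫⁻ t in Ioo a b, ENNReal.ofReal (|w' t| ^ p * A t)) ≠ ⊤ →
      (∫⁻ t in Ioo a b, ENNReal.ofReal (|w' t| ^ p * A t)) ∈ S) :
    sInf S ≤ (∫⁻ t in Ioo a b, (ENNReal.ofReal (A t)) ^ (-(1 / (p - 1)))) ^ (1 - p) := by
  have hp0 : (0:ℝ) < p := by linarith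
  have hp1 : (0:ℝ) < p - 1 := by linarith
  set B : ℝ → ℝ≥0∞ := fun t => (ENNReal.ofReal (A t)) ^ (-(1 / (p - 1))) with hB
  have hBmeas : Measurable B := (hAmeas.ennreal_ofReal).pow_const _
  have hBpos : ∀ t, 0 < B t := by
    intro t
    rcases eq_or_ne (ENNReal.ofReal (A t)) 0 with h | h
    · rw [hB]; simp only [h]
      rw [ENNReal.zero_rpow_of_neg (neg_neg_iff_pos.mpr (by positivity))]
      exact ENNReal.zero_lt_top
    · exact ENNReal.rpow_pos (pos_iff_ne_zero.2 h) ENNReal.ofReal_ne_top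
  set R : ℝ≥0∞ := ∫⁻ t in Ioo a b, B t with hRdef
  set Bk : ℕ → ℝ → ℝ≥0∞ := fun k t => min (B t) ((k:ℝ≥0∞) + 1) with hBk
  have hBk_meas : ∀ k, Measurable (Bk k) := fun k => hBmeas.min measurable_const
  have hBk_ne_top : ∀ k t, Bk k t ≠ ⊤ := by
    intro k t
    exact ne_top_of_le_ne_top (by simp : ((k:ℝ≥0∞) + 1) ≠ ⊤) (min_le_right _ _)
  have hBk_pos : ∀ k t, 0 < Bk k t := by
    intro k t
    exact lt_min (hBpos t) (lt_of_lt_of_le zero_lt_one le_add_self)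
  set ck : ℕ → ℝ≥0∞ := fun k => ∫⁻ t in Ioo a b, Bk k t with hck
  have hck_top : ∀ k, ck k ≠ ⊤ := by
    intro k
    have h1 : ck k ≤ ((k:ℝ≥0∞) + 1) * volume (Ioo a b) := by
      rw [hck]
      calc (∫⁻ t in Ioo a b, Bk k t) ≤ ∫⁻ _ in Ioo a b, ((k:ℝ≥0∞)+1) :=
            lintegral_mono fun t => min_le_right _ _
        _ = ((k:ℝ≥0∞) + 1) * volume (Ioo a b) := setLIntegral_const _ _
    exact ne_top_of_le_ne_top (ENNReal.mul_ne_top (by simp) (by simp [Real.volume_Ioo])) h1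
  have hck_pos : ∀ k, 0 < ck k := by
    intro k
    rw [hck]
    rw [lintegral_pos_iff_support (hBk_meas k)]
    have hsupp : Function.support (Bk k) = univ := by
      ext t; simp [Function.support, (hBk_pos k t).ne']
    rw [hsupp]
    simp [Measure.restrict_apply, hab]
  -- sup
  have hsup : ∀ t, (⨆ k, Bk k t) = B t := by
    intro t
    apply le_antisymm (iSup_le fun k => min_le_left _ _)
    rcases eq_or_ne (B t) ⊤ with h | h
    · have hBk_eq : ∀ k:ℕ, Bk k t = (k:ℝ≥0∞) + 1 := by
        intro k
        rw [hBk]; dsimp only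
        rw [h, min_eq_right le_top]
      rw [h, top_le_iff, show (⨆ k, Bk k t) = ⨆ k:ℕ, ((k:ℝ≥0∞) + 1) from
        iSup_congr hBk_eq, iSup_eq_top]
      intro c hc
      obtain ⟨n, hn⟩ := ENNReal.exists_nat_gt hc.ne
      exact ⟨n, by calc c < n := hn
                    _ ≤ (n:ℝ≥0∞) + 1 := le_self_add⟩
    · obtain ⟨n, hn⟩ := ENNReal.exists_nat_gt h
      refine le_iSup_of_le n ?_
      rw [hBk]; simp only
      rw [min_eq_left (le_trans hn.le le_self_add)]
  have hmono : Monotone ck := by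
    intro m n hmn
    refine lintegral_mono fun t => ?_
    exact min_le_min le_rfl (by gcongr)
  have hlimsup : (⨆ k, ck k) = R := by
    rw [hck, hRdef, ← lintegral_iSup hBk_meas]
    · exact lintegral_congr fun t => by rw [hsup]
    · intro m n hmn t
      exact min_le_min le_rfl (by gcongr)
  have hlim : Tendsto ck atTop (𝓝 R) := hlimsup ▸ tendsto_atTop_iSup hmono
  have hlim2 : Tendsto (fun k => ck k ^ (1 - p)) atTop (𝓝 (R ^ (1 - p))) :=
    (ENNReal.continuous_rpow_const.tendsto R).comp hlim
  -- the profiles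
  refine ge_of_tendsto' hlim2 fun k => ?_
  set ckR : ℝ := (ck k).toReal with hckR
  have hckR_pos : 0 < ckR := ENNReal.toReal_pos (hck_pos k).ne' (hck_top k)
  set w : ℝ → ℝ := fun t => (Bk k t).toReal / ckR with hw
  have hw_nonneg : ∀ t, 0 ≤ w t := fun t => div_nonneg ENNReal.toReal_nonneg hckR_pos.le
  have hw_meas : Measurable w := ((hBk_meas k).ennreal_toReal).div_const _
  have hw_bdd : ∀ t, |w t| ≤ ((k:ℝ) + 1) / ckR := by
    intro t
    rw [abs_of_nonneg (hw_nonneg t)]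
    have h1 : (Bk k t).toReal ≤ (k:ℝ) + 1 := by
      calc (Bk k t).toReal ≤ ((k:ℝ≥0∞) + 1).toReal :=
            ENNReal.toReal_mono (by simp) (min_le_right _ _)
        _ = (k:ℝ) + 1 := by
            rw [ENNReal.toReal_add (by simp) (by simp)]; simp
    exact (div_le_div_iff_of_pos_right hckR_pos).mpr h1
  -- interval integrable
  have hwint : IntervalIntegrable w volume a b := by
    rw [intervalIntegrable_iff_integrableOn_Ioc_of_le hab.le]
    refine Measure.integrableOn_of_bounded (by simp [Real.volume_Ioc]) hw_meas.aestronglyMeasurable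
      (M := ((k:ℝ) + 1) / ckR) (ae_of_all _ fun t => ?_)
    rw [Real.norm_eq_abs]
    exact hw_bdd t
  -- integral = 1
  have hwone : (∫ t in a..b, w t) = 1 := by
    rw [intervalIntegral.integral_of_le hab.le]
    rw [hw]
    simp only
    rw [integral_div]
    have h1 : (∫ t in Ioc a b, (Bk k t).toReal) = (∫⁻ t in Ioc a b, Bk k t).toReal := by
      refine integral_toReal ((hBk_meas k).aemeasurable) (ae_of_all _ fun t => ?_)
      exact lt_top_iff_ne_top.2 (hBk_ne_top k t)
    have h2 : (∫⁻ t in Ioc a b, Bk k t) = ck k := by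
      rw [hck]
      exact setLIntegral_congr (Ioo_ae_eq_Ioc (μ := volume) (a := a) (b := b)).symm
    rw [h1, h2, ← hckR, div_self hckR_pos.ne']
  -- energy bound
  have henergy : (∫⁻ t in Ioo a b, ENNReal.ofReal (|w t| ^ p * A t)) ≤ ck k ^ (1 - p) := by
    have hpt : ∀ t, ENNReal.ofReal (|w t| ^ p * A t) ≤ Bk k t * ((ck k) ^ p)⁻¹ := by
      intro t
      have e1 : ENNReal.ofReal (|w t| ^ p * A t)
          = (ENNReal.ofReal (w t)) ^ p * ENNReal.ofReal (A t) := by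
        rw [ENNReal.ofReal_mul (by positivity), abs_of_nonneg (hw_nonneg t),
          ENNReal.ofReal_rpow_of_nonneg (hw_nonneg t) hp0.le]
      have e2 : ENNReal.ofReal (w t) = Bk k t / ck k := by
        rw [hw]; simp only
        rw [ENNReal.ofReal_div_of_pos hckR_pos, hckR,
          ENNReal.ofReal_toReal (hBk_ne_top k t), ENNReal.ofReal_toReal (hck_top k)]
      have e3 : (Bk k t / ck k) ^ p = Bk k t ^ p / ck k ^ p :=
        ENNReal.div_rpow_of_nonneg _ _ hp0.le
      have e4 : Bk k t ^ p * ENNReal.ofReal (A t) ≤ Bk k t :=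
        stmt17_pt p hp ENNReal.ofReal_ne_top (hBk_ne_top k t) (min_le_left _ _)
      calc ENNReal.ofReal (|w t| ^ p * A t)
          = Bk k t ^ p * ENNReal.ofReal (A t) * ((ck k) ^ p)⁻¹ := by
            rw [e1, e2, e3, div_eq_mul_inv]
            ring
        _ ≤ Bk k t * ((ck k) ^ p)⁻¹ := by gcongr
    have hinv_ne_top : ((ck k) ^ p)⁻¹ ≠ ⊤ := by
      rw [Ne, ENNReal.inv_eq_top]
      exact (ENNReal.rpow_pos (hck_pos k) (hck_top k)).ne'
    calc (∫⁻ t in Ioo a b, ENNReal.ofReal (|w t| ^ p * A t))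
        ≤ ∫⁻ t in Ioo a b, Bk k t * ((ck k) ^ p)⁻¹ := lintegral_mono hpt
      _ = ck k * ((ck k) ^ p)⁻¹ := by
          rw [lintegral_mul_const' _ _ hinv_ne_top]
      _ = ck k ^ (1 - p) := by
          rw [show (1:ℝ) - p = 1 + (-p) by ring,
            ENNReal.rpow_add _ _ (hck_pos k).ne' (hck_top k),
            ENNReal.rpow_one, ENNReal.rpow_neg]
  have hfin : (∫⁻ t in Ioo a b, ENNReal.ofReal (|w t| ^ p * A t)) ≠ ⊤ := by
    refine ne_top_of_le_ne_top ?_ henergy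
    rw [show (1:ℝ) - p = -(p - 1) by ring, ENNReal.rpow_neg, Ne, ENNReal.inv_eq_top]
    exact (ENNReal.rpow_pos (hck_pos k) (hck_top k)).ne'
  have hmem := hS w hwint hwone ⟨((k:ℝ) + 1) / ckR, fun t _ => hw_bdd t⟩ hfin
  exact le_trans (sInf_le hmem) henergy

/-- Lipschitz profiles suffice.  The infimum of the
weighted `p`-energy over absolutely continuous admissible profiles
(encoded by their derivatives: interval integrable `v'` with
`∫_a^b v' = 1`, and finite energy) equals the infimum over Lipschitz
admissible profiles (derivative bounded), and both equal
`(∫_a^b A^{-1/(p-1)})^{1-p}` in `ℝ≥0∞` (interpreted as `0` when the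
resistance diverges, via the conventions of `ℝ≥0∞`-exponentiation). -/
theorem stmt17 (p a b : ℝ) (hp : 1 < p) (hab : a < b)
    (A : ℝ → ℝ) (hAmeas : Measurable A) (hA0 : ∀ t ∈ Ioo a b, 0 ≤ A t) :
    sInf {E : ℝ≥0∞ | ∃ v' : ℝ → ℝ, IntervalIntegrable v' volume a b ∧
        (∫ t in a..b, v' t) = 1 ∧
        E = ∫⁻ t in Ioo a b, ENNReal.ofReal (|v' t| ^ p * A t) ∧ E ≠ ⊤}
      = (∫⁻ t in Ioo a b,
          (ENNReal.ofReal (A t)) ^ (-(1 / (p - 1)))) ^ (1 - p) ∧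
    sInf {E : ℝ≥0∞ | ∃ w' : ℝ → ℝ, IntervalIntegrable w' volume a b ∧
        (∫ t in a..b, w' t) = 1 ∧ (∃ C : ℝ, ∀ t ∈ Ioo a b, |w' t| ≤ C) ∧
        E = ∫⁻ t in Ioo a b, ENNReal.ofReal (|w' t| ^ p * A t)}
      = (∫⁻ t in Ioo a b,
          (ENNReal.ofReal (A t)) ^ (-(1 / (p - 1)))) ^ (1 - p) := by
  constructor
  · refine le_antisymm ?_ ?_
    · refine stmt17_up p a b hp hab A hAmeas _ ?_
      intro w' hint hone hbdd hfin
      exact ⟨w', hint, hone, rfl, hfin⟩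
    · refine le_sInf ?_
      rintro E ⟨v', hint, hone, hE, -⟩
      rw [hE]
      exact stmt17_low p a b hp hab A hAmeas v' hint hone
  · refine le_antisymm ?_ ?_
    · refine stmt17_up p a b hp hab A hAmeas _ ?_
      intro w' hint hone hbdd hfin
      exact ⟨w', hint, hone, hbdd, rfl⟩
    · refine le_sInf ?_
      rintro E ⟨v', hint, hone, -, hE⟩
      rw [hE]
      exact stmt17_low p a b hp hab A hAmeas v' hint hone
end
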